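/- Let f₀, G, Q, β be real numbers with G > 0, Q > 0 and β > 0, define φ : ℝ → ℝ by φ(α) = f₀ − αG/(1 − αβ) + (α²/2)·Q/(1 − αβ)², and set α^S = G/(Q + Gβ). Then α^S is the strict global minimizer of φ over all positive α different from the singular point: for every α > 0 with α ≠ 1/β and α ≠ α^S, φ(α) > φ(α^S). -/

import Mathlib

theorem conic_model_global_min_positive_singular_point (f₀ G Q β : ℝ)
    (hG : G > 0) (hQ : Q > 0) (hβ : β > 0)
    (φ : ℝ → ℝ)
    (hφ : ∀ α : ℝ, φ α = f₀ - α * G / (1 - α * β) + α ^ 2 / 2 * Q / (1 - α * β) ^ 2)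
    (αS : ℝ) (hαS : αS = G / (Q + G * β)) :
    ∀ α : ℝ, α > 0 → α ≠ 1 / β → α ≠ αS → φ α > φ αS := by
  intro α hα h1 h2
  have hQG : Q + G * β > 0 := by positivity
  have hβ' : β ≠ 0 := ne_of_gt hβ
  have hden : 1 - α * β ≠ 0 := by
    intro h
    apply h1
    field_simp
    linarith
  set t : ℝ := α / (1 - α * β) with ht
  have hφα : φ α = f₀ - G * t + Q * t ^ 2 / 2 := by
    rw [hφ, ht]
    field_simp
  have hαSden : 1 - αS * β = Q / (Q + G * β) := by
    rw [hαS]; field_simp; ring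
  have hφαS : φ αS = f₀ - G ^ 2 / (2 * Q) := by
    rw [hφ, hαSden, hαS]
    field_simp
    ring
  have htne : t ≠ G / Q := by
    intro h
    apply h2
    have : α = t * (1 - α * β) := by
      rw [ht]; field_simp
    rw [h] at this
    rw [hαS]
    have : α * (Q + G * β) = G := by
      field_simp at this
      linarith
    field_simp
    linarith
  have hsq : (t - G / Q) ^ 2 > 0 :=
    pow_two_pos_of_ne_zero (sub_ne_zero.mpr htne)
  rw [hφα, hφαS]
  have hQ' : Q ≠ 0 := ne_of_gt hQ
  have h3 : Q * (t - G / Q) ^ 2 > 0 := mul_pos hQ hsq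
  have expand : Q * (t - G / Q) ^ 2 = Q * t ^ 2 - 2 * G * t + G ^ 2 / Q := by
    field_simp; ring
  have h4 : G ^ 2 / (2 * Q) = (G ^ 2 / Q) / 2 := by
    rw [div_div]; ring_nf
  linarith
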